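/- Let V : ℝ → ℝ and e : ℝ → ℝ^n be differentiable functions, and let c > 0 and M ≥ 0 be real numbers such that for all t ≥ 0: V(t) ≥ 0, V'(t) ≤ -c·‖e(t)‖², and ‖e'(t)‖ ≤ M. Then e(t) → 0 as t → ∞ (i.e., e tends to 0 along the filter atTop). -/

import Mathlib

open Filter MeasureTheory intervalIntegral Set


/-- Barbalat-type argument for claim (d) of Theorem 1 and claim (e) of
Theorem 3. A nonnegative function `V` whose derivative is bounded above by `-c‖e‖²`, together
with a uniformly bounded derivative of `e`, forces `e(t) → 0` as `t → ∞`. -/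
theorem tendsto_zero_of_lyapunov_barbalat
    {n : ℕ} (V : ℝ → ℝ) (e : ℝ → EuclideanSpace ℝ (Fin n))
    (hV : Differentiable ℝ V) (he : Differentiable ℝ e)
    (c M : ℝ) (hc : 0 < c) (hM : 0 ≤ M)
    (hVnonneg : ∀ t ≥ (0:ℝ), 0 ≤ V t)
    (hVder : ∀ t ≥ (0:ℝ), deriv V t ≤ -c * ‖e t‖ ^ 2)
    (heder : ∀ t ≥ (0:ℝ), ‖deriv e t‖ ≤ M) :
    Filter.Tendsto e Filter.atTop (nhds 0) := by
  -- the squared-norm integrand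
  set f : ℝ → ℝ := fun s => ‖e s‖ ^ 2 with hf
  have hfc : Continuous f := (he.continuous.norm).pow 2
  have hfnn : ∀ s, 0 ≤ f s := fun s => sq_nonneg _
  -- F is the primitive of f
  set F : ℝ → ℝ := fun T => ∫ s in (0:ℝ)..T, f s with hF
  have hFd : ∀ T, deriv F T = f T := fun T => hfc.deriv_integral f 0 T
  have hFmono : Monotone F := by
    intro a b hab
    have : F b - F a = ∫ s in a..b, f s := by
      rw [hF]
      simp only
      rw [← intervalIntegral.integral_add_adjacent_intervals
        (hfc.intervalIntegrable 0 a) (hfc.intervalIntegrable a b)]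
      ring
    nlinarith [intervalIntegral.integral_nonneg (μ := volume) hab (fun s _ => hfnn s)]
  -- V + c • F is antitone on [0, ∞)
  have hFdiff : Differentiable ℝ F := fun T =>
    (intervalIntegral.integral_hasDerivAt_right (hfc.intervalIntegrable 0 T)
      (hfc.stronglyMeasurableAtFilter volume (nhds T)) hfc.continuousAt).differentiableAt
  have hg : AntitoneOn (fun t => V t + c * F t) (Ici (0:ℝ)) := by
    apply antitoneOn_of_deriv_nonpos (convex_Ici 0)
      ((hV.continuous.add (continuous_const.mul hFdiff.continuous)).continuousOn)
      ((hV.add ((differentiable_const c).mul hFdiff)).differentiableOn)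
    intro x hx
    rw [interior_Ici] at hx
    have hx0 : (0:ℝ) ≤ x := le_of_lt hx
    have : deriv (fun t => V t + c * F t) x = deriv V x + c * f x := by
      rw [deriv_fun_add (hV x) (((hFdiff x).const_mul c)), deriv_const_mul c (hFdiff x), hFd]
    show deriv (fun t => V t + c * F t) x ≤ 0; rw [this]
    have h5 := hVder x hx0
    have h6 : f x = ‖e x‖ ^ 2 := rfl
    nlinarith
  -- F is bounded above by V 0 / c
  have hFbdd : ∀ T, F T ≤ V 0 / c := by
    intro T
    have key : ∀ T ≥ (0:ℝ), F T ≤ V 0 / c := by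
      intro T hT
      have := hg (self_mem_Ici) (mem_Ici.2 hT) hT
      have hVT := hVnonneg T hT
      have : c * F T ≤ V 0 := by
        have hF0 : F 0 = 0 := by simp [hF]
        simp only [hF0, mul_zero, add_zero] at this
        linarith
      rw [le_div_iff₀ hc]; linarith [this]
    rcases le_total 0 T with h | h
    · exact key T h
    · calc F T ≤ F 0 := hFmono h
        _ ≤ V 0 / c := key 0 le_rfl
  -- F converges
  have hFtend : Tendsto F atTop (nhds (⨆ T, F T)) :=
    tendsto_atTop_ciSup hFmono ⟨V 0 / c, by rintro x ⟨T, rfl⟩; exact hFbdd T⟩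
  -- By contradiction
  rw [tendsto_zero_iff_norm_tendsto_zero]
  by_contra hcon
  rw [Metric.tendsto_atTop] at hcon
  push_neg at hcon
  obtain ⟨ε, hε, hfreq⟩ := hcon
  set M' : ℝ := M + 1 with hM'
  have hM'pos : 0 < M' := by linarith
  set δ : ℝ := ε / (2 * M') with hδ
  have hδpos : 0 < δ := div_pos hε (by linarith)
  clear_value M' δ
  -- the difference F(t+δ) - F(t) tends to 0
  have hdiff : Tendsto (fun t => F (t + δ) - F t) atTop (nhds 0) := by
    have h1 : Tendsto (fun t => F (t + δ)) atTop (nhds (⨆ T, F T)) :=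
      hFtend.comp (tendsto_atTop_add_const_right _ δ tendsto_id)
    simpa using h1.sub hFtend
  -- but frequently it is ≥ δ * (ε/2)^2
  have key : ∀ᶠ t in atTop, F (t + δ) - F t < δ * (ε / 2) ^ 2 := by
    have := hdiff (Iio_mem_nhds (show (0:ℝ) < δ * (ε/2)^2 by positivity))
    filter_upwards [this] with t ht using ht
  rw [eventually_atTop] at key
  obtain ⟨N, hN⟩ := key
  obtain ⟨t₀, ht₀, ht₀e⟩ := hfreq (max N 0)
  have ht₀0 : (0:ℝ) ≤ t₀ := le_trans (le_max_right N 0) ht₀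
  have ht₀N : N ≤ t₀ := le_trans (le_max_left N 0) ht₀
  have hεe : ε ≤ ‖e t₀‖ := by
    have h := ht₀e
    rwa [Real.dist_eq, sub_zero, abs_of_nonneg (norm_nonneg _)] at h
  -- on [t₀, t₀+δ], ‖e t‖ ≥ ε/2
  have hlow : ∀ t ∈ Icc t₀ (t₀ + δ), ε / 2 ≤ ‖e t‖ := by
    intro t ht
    have hbound : ‖e t - e t₀‖ ≤ M' * (t - t₀) := by
      apply norm_image_sub_le_of_norm_deriv_le_segment'
        (f' := deriv e) (fun x hx => (he x).hasDerivAt.hasDerivWithinAt) ?_ t ht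
      intro x hx
      have hx0 : (0:ℝ) ≤ x := le_trans ht₀0 hx.1
      exact le_trans (heder x hx0) (by linarith)
    have h2 : M' * (t - t₀) ≤ M' * δ := by
      apply mul_le_mul_of_nonneg_left _ (le_of_lt hM'pos)
      linarith [ht.2]
    have h3 : M' * δ = ε / 2 := by
      rw [hδ]; field_simp
    have h5 : ‖e t₀‖ - ‖e t‖ ≤ M' * (t - t₀) := by
      refine le_trans (le_trans (norm_sub_norm_le _ _) ?_) le_rfl
      rw [norm_sub_rev]; exact hbound
    linarith
  -- lower bound the integral
  have hint : δ * (ε / 2) ^ 2 ≤ F (t₀ + δ) - F t₀ := by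
    have heq : F (t₀ + δ) - F t₀ = ∫ s in t₀..(t₀ + δ), f s := by
      rw [hF]; simp only
      rw [← intervalIntegral.integral_add_adjacent_intervals
        (hfc.intervalIntegrable 0 t₀) (hfc.intervalIntegrable t₀ (t₀ + δ))]
      ring
    rw [heq]
    have : ∫ s in t₀..(t₀ + δ), (ε/2)^2 ≤ ∫ s in t₀..(t₀ + δ), f s := by
      apply intervalIntegral.integral_mono_on (by linarith) (intervalIntegrable_const)
        (hfc.intervalIntegrable _ _)
      intro x hx
      have h5 := hlow x hx
      have h6 : f x = ‖e x‖ ^ 2 := rfl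
      nlinarith [norm_nonneg (e x)]
    simpa [mul_comm] using this
  have := hN t₀ ht₀N
  linarith
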